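/- Let d ≥ 2 and let v₀,...,v_d ∈ ℝ^d \ {0} be the vertices of a d-dimensional simplex whose convex hull contains the origin. Setting wᵢ = vᵢ/|vᵢ|, there exist indices 0 ≤ i < j ≤ d with wᵢ · wⱼ ≤ -1/d. -/
import Mathlib

open scoped RealInnerProductSpace

/-- If `v₀,...,v_d` are nonzero, affinely independent points of `ℝ^d` whose convex hull
contains the origin, then two of the normalized vectors `wᵢ = vᵢ/‖vᵢ‖` have inner
product at most `-1/d`. -/
theorem min_inner_le_of_simplex_contains_origin
    (d : ℕ) (hd : 2 ≤ d)
    (v : Fin (d + 1) → EuclideanSpace ℝ (Fin d))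
    (hindep : AffineIndependent ℝ v)
    (hne : ∀ i, v i ≠ 0)
    (h0 : (0 : EuclideanSpace ℝ (Fin d)) ∈ convexHull ℝ (Set.range v)) :
    ∃ i j : Fin (d + 1), i < j ∧
      ⟪‖v i‖⁻¹ • v i, ‖v j‖⁻¹ • v j⟫ ≤ -(1 / (d : ℝ)) := by
  by_contra hcon
  push_neg at hcon
  set W : Fin (d+1) → EuclideanSpace ℝ (Fin d) := fun i => ‖v i‖⁻¹ • v i with hW
  have hnorm : ∀ i, ‖v i‖ ≠ 0 := fun i => norm_ne_zero_iff.mpr (hne i)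
  have hWunit : ∀ i, ⟪W i, W i⟫ = 1 := by
    intro i
    rw [real_inner_self_eq_norm_sq]
    rw [hW]
    simp [norm_smul, abs_of_nonneg (inv_nonneg.mpr (norm_nonneg (v i))),
      inv_mul_cancel₀ (hnorm i)]
  have hoff : ∀ i j : Fin (d+1), i ≠ j → -(1/(d:ℝ)) < ⟪W i, W j⟫ := by
    intro i j hij
    rcases lt_or_gt_of_ne hij with h | h
    · exact hcon i j h
    · rw [real_inner_comm]; exact hcon j i h
  -- extract convex combination
  rw [convexHull_range_eq_exists_affineCombination] at h0
  obtain ⟨s, w, hw0, hw1, hwv⟩ := h0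
  rw [Finset.affineCombination_eq_linear_combination s v w hw1] at hwv
  set lam : Fin (d+1) → ℝ := fun i => if i ∈ s then w i else 0 with hlam
  have hlam0 : ∀ i, 0 ≤ lam i := by
    intro i; by_cases h : i ∈ s <;> simp [hlam, h]
    exact hw0 i h
  have hlamsum : ∑ i, lam i = 1 := by
    rw [← hw1, hlam]
    simp [Finset.sum_ite_mem]
  have hlamv : ∑ i, lam i • v i = 0 := by
    rw [← hwv, hlam]
    simp [ite_smul, Finset.sum_ite_mem]
  set μ : Fin (d+1) → ℝ := fun i => lam i * ‖v i‖ with hμ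
  have hμ0 : ∀ i, 0 ≤ μ i := fun i => mul_nonneg (hlam0 i) (norm_nonneg _)
  have hμW : ∀ i, μ i • W i = lam i • v i := by
    intro i
    rw [hμ, hW, smul_smul, mul_assoc, mul_inv_cancel₀ (hnorm i), mul_one]
  have hsum0 : ∑ i, μ i • W i = 0 := by
    simp_rw [hμW]; exact hlamv
  -- two positive coefficients
  obtain ⟨a, ha⟩ : ∃ a, 0 < lam a := by
    by_contra h
    push_neg at h
    have : ∀ i ∈ Finset.univ, lam i = 0 := fun i _ => le_antisymm (h i) (hlam0 i)
    rw [Finset.sum_congr rfl this] at hlamsum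
    simp at hlamsum
  obtain ⟨b, hb, hab⟩ : ∃ b, 0 < lam b ∧ a ≠ b := by
    by_contra h
    push_neg at h
    have hz : ∀ i, i ≠ a → lam i = 0 := by
      intro i hi
      by_contra hz
      have : 0 < lam i := (hlam0 i).lt_of_ne (Ne.symm hz)
      exact hi (h i this).symm
    have h1 : lam a = 1 := by
      rw [← hlamsum]
      rw [Finset.sum_eq_single a (fun i _ hi => hz i hi) (by simp)]
    have : lam a • v a = 0 := by
      rw [← hlamv, Finset.sum_eq_single a (fun i _ hi => by rw [hz i hi, zero_smul]) (by simp)]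
    rw [h1, one_smul] at this
    exact hne a this
  have hμa : 0 < μ a := mul_pos ha (norm_pos_iff.mpr (hne a))
  have hμb : 0 < μ b := mul_pos hb (norm_pos_iff.mpr (hne b))
  -- the key zero identity
  have key : ∑ i, ∑ j, μ i * μ j * ⟪W i, W j⟫ = 0 := by
    have h := hsum0
    have : ⟪∑ i, μ i • W i, ∑ j, μ j • W j⟫ = (0:ℝ) := by rw [h]; simp
    rw [inner_sum] at this
    simp_rw [sum_inner, real_inner_smul_left, real_inner_smul_right] at this
    rw [Finset.sum_comm] at this
    simp_rw [← Finset.mul_sum] at this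
    convert this using 2 with i
    rw [Finset.mul_sum]
    congr 1 with j
    ring
  -- lower bound function
  have hbound : ∀ i j : Fin (d+1), μ i * μ j * (if i = j then 1 else -(1/(d:ℝ)))
      ≤ μ i * μ j * ⟪W i, W j⟫ := by
    intro i j
    by_cases h : i = j
    · subst h; rw [hWunit i]; simp
    · simp only [h, if_false]
      exact mul_le_mul_of_nonneg_left (le_of_lt (hoff i j h))
        (mul_nonneg (hμ0 i) (hμ0 j))
  have hstrict : μ a * μ b * (if a = b then 1 else -(1/(d:ℝ)))
      < μ a * μ b * ⟪W a, W b⟫ := by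
    simp only [hab, if_false]
    exact mul_lt_mul_of_pos_left (hoff a b hab) (mul_pos hμa hμb)
  have hlt : ∑ i, ∑ j, μ i * μ j * (if i = j then 1 else -(1/(d:ℝ)))
      < ∑ i, ∑ j, μ i * μ j * ⟪W i, W j⟫ := by
    rw [← Finset.sum_product' (f := fun i j => μ i * μ j * (if i = j then 1 else -(1/(d:ℝ)))),
      ← Finset.sum_product' (f := fun i j => μ i * μ j * ⟪W i, W j⟫)]
    apply Finset.sum_lt_sum
    · rintro ⟨i, j⟩ _
      exact hbound i j
    · exact ⟨(a, b), Finset.mem_univ _, hstrict⟩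
  -- nonnegativity of the model sum
  have hd0 : (0:ℝ) < d := by positivity
  have hT : (∑ i, μ i)^2 ≤ ((d:ℝ)+1) * ∑ i, μ i^2 := by
    have := sq_sum_le_card_mul_sum_sq (s := (Finset.univ : Finset (Fin (d+1)))) (f := μ)
    simpa using this
  have hEq : ∑ i, ∑ j, μ i * μ j * (if i = j then 1 else -(1/(d:ℝ)))
      = -(1/(d:ℝ)) * (∑ i, μ i)^2 + (1 + 1/(d:ℝ)) * ∑ i, μ i^2 := by
    have hterm : ∀ i j : Fin (d+1), μ i * μ j * (if i = j then 1 else -(1/(d:ℝ)))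
        = -(1/(d:ℝ)) * (μ i * μ j) + (if j = i then (1 + 1/(d:ℝ)) * μ i^2 else 0) := by
      intro i j
      by_cases h : i = j
      · subst h; simp; ring
      · simp only [h, Ne.symm h, if_false, add_zero]
        ring
    have e1 : ∑ i : Fin (d+1), ∑ j : Fin (d+1), -(1/(d:ℝ)) * (μ i * μ j)
        = -(1/(d:ℝ)) * (∑ i, μ i)^2 := by
      rw [sq, Finset.sum_mul_sum, Finset.mul_sum]
      exact Finset.sum_congr rfl fun i _ => by rw [Finset.mul_sum]
    simp_rw [hterm, Finset.sum_add_distrib, Finset.sum_ite_eq', Finset.mem_univ, if_true]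
    rw [e1, ← Finset.mul_sum]
  have hge : (0:ℝ) ≤ ∑ i, ∑ j, μ i * μ j * (if i = j then 1 else -(1/(d:ℝ))) := by
    rw [hEq]
    have hμsq : (0:ℝ) ≤ ∑ i, μ i^2 := Finset.sum_nonneg fun i _ => sq_nonneg _
    have h1 : (1/(d:ℝ)) * (d:ℝ) = 1 := by field_simp
    nlinarith [mul_le_mul_of_nonneg_left hT (le_of_lt (one_div_pos.mpr hd0))]
  rw [key] at hlt
  linarith
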